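/- Let a, b, c and (l_ij), (m_ij) and F be as in the generalized Monge–Ampère setup. There exists a constant C > 0, depending only on F, a, b, c, (l_ij), (m_ij), such that for every t ∈ [0,1] and every twice continuously differentiable biperiodic function p satisfying the deformed equation (GMA_t) and the deformed ellipticity condition (E_t), one has |p_x| ≤ C and |p_y| ≤ C everywhere on ℝ², and moreover |p(x,y) − ∫_{𝕋²} p| ≤ C for all (x,y) ∈ ℝ². -/

import Mathlib

open MeasureTheory

/-- Partial derivative in the first variable. -/
noncomputable def pdx (p : ℝ × ℝ → ℝ) (z : ℝ × ℝ) : ℝ := fderiv ℝ p z (1, 0)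

/-- Partial derivative in the second variable. -/
noncomputable def pdy (p : ℝ × ℝ → ℝ) (z : ℝ × ℝ) : ℝ := fderiv ℝ p z (0, 1)

/-- A function `ℝ² → ℝ` is biperiodic if it has period 1 in each variable. -/
def Biperiodic (p : ℝ × ℝ → ℝ) : Prop :=
  ∀ x y : ℝ, p (x + 1, y) = p (x, y) ∧ p (x, y + 1) = p (x, y)

/-- The integral over the torus `𝕋² = ℝ²/ℤ²` of (the descent of) a biperiodic function. -/
noncomputable def torusInt (f : ℝ × ℝ → ℝ) : ℝ := ∫ x in (0:ℝ)..1, ∫ y in (0:ℝ)..1, f (x, y)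

section Aux

lemma per_int {ψ : ℝ → ℝ} (h : Function.Periodic ψ 1) (n : ℤ) (x : ℝ) : ψ (x + n) = ψ x := by
  simpa using (h.int_mul n) x

lemma exp_sq {u : ℝ} : Real.exp u * Real.exp u = Real.exp (2 * u) := by
  rw [← Real.exp_add]; ring_nf

lemma posdef2_diag {M : Matrix (Fin 2) (Fin 2) ℝ} (h : M.PosDef) : 0 < M 0 0 ∧ 0 < M 1 1 := by
  constructor
  · exact h.diag_pos
  · exact h.diag_pos

/-- Key 1-D lemma: a differentiable `1`-periodic function vanishing somewhere and satisfying
`ψ' ≥ s ψ - K` is bounded by `K e^{2|s|}`. -/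
lemma keyODE {ψ : ℝ → ℝ} {s K : ℝ} (hψ : Differentiable ℝ ψ)
    (hper : Function.Periodic ψ 1) {x₀ : ℝ} (h0 : ψ x₀ = 0) (hK : 0 ≤ K)
    (hineq : ∀ x, s * ψ x - K ≤ deriv ψ x) (x : ℝ) :
    |ψ x| ≤ K * Real.exp (2 * |s|) := by
  set B : ℝ := K * Real.exp |s| with hB
  have hBnn : 0 ≤ B := mul_nonneg hK (Real.exp_pos _).le
  set g : ℝ → ℝ := fun y => Real.exp (-s * (y - x₀)) * ψ y + B * y with hg
  have hgd : ∀ y, HasDerivAt g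
      (Real.exp (-s * (y - x₀)) * (deriv ψ y - s * ψ y) + B) y := by
    intro y
    have h1 : HasDerivAt (fun y : ℝ => -s * (y - x₀)) (-s) y := by
      simpa using (((hasDerivAt_id y).sub_const x₀).const_mul (-s))
    have he : HasDerivAt (fun y => Real.exp (-s * (y - x₀)))
        (Real.exp (-s * (y - x₀)) * (-s)) y := by
      simpa [mul_comm, Function.comp_def] using (Real.hasDerivAt_exp (-s * (y - x₀))).comp y h1
    have hp : HasDerivAt ψ (deriv ψ y) y := (hψ y).hasDerivAt
    have := (he.mul hp).add ((hasDerivAt_id y).const_mul B)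
    exact this.congr_deriv (by ring)
  have hgdiff : Differentiable ℝ g := fun y => (hgd y).differentiableAt
  have hmono : MonotoneOn g (Set.Icc (x₀ - 1) (x₀ + 1)) := by
    apply monotoneOn_of_deriv_nonneg (convex_Icc _ _) hgdiff.continuous.continuousOn
      hgdiff.differentiableOn
    intro y hy
    rw [interior_Icc] at hy
    rw [(hgd y).deriv]
    have hyd : |y - x₀| ≤ 1 := by
      rw [abs_le]; constructor <;> [linarith [hy.1]; linarith [hy.2]]
    have hexp : Real.exp (-s * (y - x₀)) ≤ Real.exp |s| := by
      apply Real.exp_le_exp.mpr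
      calc -s * (y - x₀) ≤ |(-s) * (y - x₀)| := le_abs_self _
        _ = |s| * |y - x₀| := by rw [abs_mul, abs_neg]
        _ ≤ |s| * 1 := mul_le_mul_of_nonneg_left hyd (abs_nonneg s)
        _ = |s| := mul_one _
    have h1 : -K ≤ deriv ψ y - s * ψ y := by linarith [hineq y]
    have h2 : Real.exp (-s * (y - x₀)) * (deriv ψ y - s * ψ y) ≥ -B := by
      rcases le_or_gt 0 (deriv ψ y - s * ψ y) with h | h
      · nlinarith [(Real.exp_pos (-s * (y - x₀))).le]
      · nlinarith [mul_le_mul_of_nonpos_right hexp h.le,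
          mul_le_mul_of_nonneg_left h1 (Real.exp_pos |s|).le]
    linarith
  have hlow : ∀ y ∈ Set.Icc x₀ (x₀ + 1), -(K * Real.exp (2 * |s|)) ≤ ψ y := by
    intro y hy
    have hmem : y ∈ Set.Icc (x₀ - 1) (x₀ + 1) := ⟨by linarith [hy.1], hy.2⟩
    have hx₀mem : x₀ ∈ Set.Icc (x₀ - 1) (x₀ + 1) := ⟨by linarith, by linarith⟩
    have hmo := hmono hx₀mem hmem hy.1
    have hgx₀ : g x₀ = B * x₀ := by simp [hg, h0]
    rw [hgx₀, hg] at hmo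
    dsimp at hmo
    have h2 : -(B * 1) ≤ Real.exp (-s * (y - x₀)) * ψ y := by
      nlinarith [mul_le_mul_of_nonneg_left (show y - x₀ ≤ 1 by linarith [hy.2]) hBnn]
    have hmul := mul_le_mul_of_nonneg_left h2 (Real.exp_pos (s * (y - x₀))).le
    have hee : Real.exp (s * (y - x₀)) * Real.exp (-s * (y - x₀)) = 1 := by
      rw [← Real.exp_add]; ring_nf; exact Real.exp_zero
    rw [← mul_assoc, hee, one_mul] at hmul
    have hexp2 : Real.exp (s * (y - x₀)) ≤ Real.exp |s| := by
      apply Real.exp_le_exp.mpr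
      calc s * (y - x₀) ≤ |s * (y - x₀)| := le_abs_self _
        _ = |s| * |y - x₀| := abs_mul _ _
        _ ≤ |s| * 1 := mul_le_mul_of_nonneg_left
            (abs_le.mpr ⟨by linarith [hy.1], by linarith [hy.2]⟩) (abs_nonneg s)
        _ = |s| := mul_one _
    nlinarith [mul_le_mul_of_nonneg_right hexp2 hBnn, exp_sq (u := |s|),
      (Real.exp_pos |s|).le]
  have hup : ∀ y ∈ Set.Icc (x₀ - 1) x₀, ψ y ≤ K * Real.exp (2 * |s|) := by
    intro y hy
    have hmem : y ∈ Set.Icc (x₀ - 1) (x₀ + 1) := ⟨hy.1, by linarith [hy.2]⟩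
    have hx₀mem : x₀ ∈ Set.Icc (x₀ - 1) (x₀ + 1) := ⟨by linarith, by linarith⟩
    have hmo := hmono hmem hx₀mem hy.2
    have hgx₀ : g x₀ = B * x₀ := by simp [hg, h0]
    rw [hgx₀, hg] at hmo
    dsimp at hmo
    have h2 : Real.exp (-s * (y - x₀)) * ψ y ≤ B * 1 := by
      nlinarith [mul_le_mul_of_nonneg_left (show x₀ - y ≤ 1 by linarith [hy.1]) hBnn]
    have hmul := mul_le_mul_of_nonneg_left h2 (Real.exp_pos (s * (y - x₀))).le
    have hee : Real.exp (s * (y - x₀)) * Real.exp (-s * (y - x₀)) = 1 := by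
      rw [← Real.exp_add]; ring_nf; exact Real.exp_zero
    rw [← mul_assoc, hee, one_mul] at hmul
    have hexp2 : Real.exp (s * (y - x₀)) ≤ Real.exp |s| := by
      apply Real.exp_le_exp.mpr
      calc s * (y - x₀) ≤ |s * (y - x₀)| := le_abs_self _
        _ = |s| * |y - x₀| := abs_mul _ _
        _ ≤ |s| * 1 := mul_le_mul_of_nonneg_left
            (abs_le.mpr ⟨by linarith [hy.1], by linarith [hy.2]⟩) (abs_nonneg s)
        _ = |s| := mul_one _
    nlinarith [mul_le_mul_of_nonneg_right hexp2 hBnn, exp_sq (u := |s|),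
      (Real.exp_pos |s|).le]
  have hper_int : ∀ (n : ℤ) (y : ℝ), ψ (y + n) = ψ y := fun n y => per_int hper n y
  rw [abs_le]
  constructor
  · set n : ℤ := ⌊x - x₀⌋ with hn
    have hpsi : ψ x = ψ (x - n) := by
      have := hper_int n (x - n); rw [sub_add_cancel] at this; exact this
    rw [hpsi]
    apply hlow
    have hfl := Int.floor_le (x - x₀)
    have hfl2 := Int.lt_floor_add_one (x - x₀)
    have hcast : (n : ℝ) = (⌊x - x₀⌋ : ℝ) := by rw [hn]
    exact ⟨by rw [hcast]; linarith, by rw [hcast]; linarith⟩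
  · set n : ℤ := ⌊x - x₀⌋ + 1 with hn
    have hpsi : ψ x = ψ (x - n) := by
      have := hper_int n (x - n); rw [sub_add_cancel] at this; exact this
    rw [hpsi]
    apply hup
    have hfl := Int.floor_le (x - x₀)
    have hfl2 := Int.lt_floor_add_one (x - x₀)
    have hcast : (n : ℝ) = (⌊x - x₀⌋ : ℝ) + 1 := by rw [hn]; push_cast; ring
    exact ⟨by rw [hcast]; linarith, by rw [hcast]; linarith⟩

lemma hasDerivAt_sliceX {p : ℝ × ℝ → ℝ} {x y : ℝ} (hp : DifferentiableAt ℝ p (x, y)) :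
    HasDerivAt (fun t => p (t, y)) (pdx p (x, y)) x := by
  have hγ : HasDerivAt (fun t : ℝ => (t, y)) ((1 : ℝ), (0 : ℝ)) x :=
    (hasDerivAt_id x).prodMk (hasDerivAt_const x y)
  exact hp.hasFDerivAt.comp_hasDerivAt x hγ

lemma hasDerivAt_sliceY {p : ℝ × ℝ → ℝ} {x y : ℝ} (hp : DifferentiableAt ℝ p (x, y)) :
    HasDerivAt (fun t => p (x, t)) (pdy p (x, y)) y := by
  have hγ : HasDerivAt (fun t : ℝ => (x, t)) ((0 : ℝ), (1 : ℝ)) y :=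
    (hasDerivAt_const y x).prodMk (hasDerivAt_id y)
  exact hp.hasFDerivAt.comp_hasDerivAt y hγ

lemma contDiff_pdx {p : ℝ × ℝ → ℝ} (hp : ContDiff ℝ 2 p) : ContDiff ℝ 1 (pdx p) :=
  (hp.fderiv_right (by norm_num)).clm_apply contDiff_const

lemma contDiff_pdy {p : ℝ × ℝ → ℝ} (hp : ContDiff ℝ 2 p) : ContDiff ℝ 1 (pdy p) :=
  (hp.fderiv_right (by norm_num)).clm_apply contDiff_const

lemma fderiv_per {p : ℝ × ℝ → ℝ} (hd : Differentiable ℝ p) {c : ℝ × ℝ}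
    (h : ∀ z, p (z + c) = p z) (z : ℝ × ℝ) : fderiv ℝ p (z + c) = fderiv ℝ p z := by
  have h1 : HasFDerivAt (fun w : ℝ × ℝ => w + c) (ContinuousLinearMap.id ℝ (ℝ × ℝ)) z :=
    (hasFDerivAt_id z).add_const c
  have h2 := (hd (z + c)).hasFDerivAt.comp z h1
  have h3 : (p ∘ fun w : ℝ × ℝ => w + c) = p := funext fun w => h w
  rw [h3] at h2
  rw [h2.fderiv, ContinuousLinearMap.comp_id]

end Aux

/-- A priori gradient and oscillation estimates, uniform in `t ∈ [0,1]`, for solutions of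
the deformed generalized Monge–Ampère equations on the 2-torus. -/
theorem gma_gradient_estimate (a b c l11 l12 l22 m11 m12 m22 : ℝ)
    (hpd : (!![a, c; c, b]).PosDef)
    (h1 : m11 * l22 = 0)
    (h2 : l11 * l22 - l12 ^ 2 = 0)
    (h3 : m11 * m22 - m12 ^ 2 = 0)
    (h4 : l11 * m22 + l22 * m11 - 2 * l12 * m12 = 0)
    (F : ℝ × ℝ → ℝ) (hF : ContDiff ℝ (⊤ : ℕ∞) F) (hFper : Biperiodic F) :
    ∃ C : ℝ, 0 < C ∧ ∀ t : ℝ, t ∈ Set.Icc (0:ℝ) 1 →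
      ∀ p : ℝ × ℝ → ℝ, ContDiff ℝ 2 p → Biperiodic p →
      (∀ z : ℝ × ℝ,
        (a + pdx (pdx p) z - t * l11 * pdx p z - t * m11 * pdy p z) *
            (b + pdy (pdy p) z - t * l22 * pdx p z - t * m22 * pdy p z) -
          (c + pdy (pdx p) z - t * l12 * pdx p z - t * m12 * pdy p z) ^ 2
            = t * Real.exp (F z) + (1 - t) * (a * b - c ^ 2)) →
      (∀ z : ℝ × ℝ,
        (!![a + pdx (pdx p) z - t * l11 * pdx p z - t * m11 * pdy p z,
            c + pdy (pdx p) z - t * l12 * pdx p z - t * m12 * pdy p z;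
            c + pdy (pdx p) z - t * l12 * pdx p z - t * m12 * pdy p z,
            b + pdy (pdy p) z - t * l22 * pdx p z - t * m22 * pdy p z]).PosDef) →
      ∀ z : ℝ × ℝ, |pdx p z| ≤ C ∧ |pdy p z| ≤ C ∧ |p z - torusInt p| ≤ C := by
  -- positivity of a and b
  have hdiag := posdef2_diag hpd
  have ha : 0 < a := by simpa using hdiag.1
  have hb : 0 < b := by simpa using hdiag.2
  -- the constants
  set S : ℝ := |l11| + |l22| + |m11| + |m22| with hSdef
  have hS : 0 ≤ S := by positivity
  set E : ℝ := Real.exp (2 * S) with hEdef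
  have hEpos : 0 < E := Real.exp_pos _
  have hE1 : 1 ≤ E := Real.one_le_exp (by positivity)
  set B1 : ℝ := (a + b) * E with hB1def
  have hB1pos : 0 < B1 := by positivity
  set B2 : ℝ := (a + b + S * B1) * E with hB2def
  have hB2pos : 0 < B2 := by positivity
  have hB1le : B1 ≤ B2 := by
    rw [hB1def, hB2def]
    apply mul_le_mul_of_nonneg_right _ hEpos.le
    linarith [mul_nonneg hS hB1pos.le]
  refine ⟨2 * B2 + 1, by linarith, ?_⟩
  intro t ht p hp hbp _heq hell
  have htabs : |t| ≤ 1 := abs_le.mpr ⟨by linarith [ht.1], ht.2⟩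
  -- differentiability
  have hpdiff : Differentiable ℝ p := hp.differentiable (by norm_num)
  have hdx : Differentiable ℝ (pdx p) := (contDiff_pdx hp).differentiable (by norm_num)
  have hdy : Differentiable ℝ (pdy p) := (contDiff_pdy hp).differentiable (by norm_num)
  -- periodicity in vector form
  have hper1 : ∀ z : ℝ × ℝ, p (z + ((1:ℝ), (0:ℝ))) = p z := by
    intro z
    have he : z + ((1:ℝ), (0:ℝ)) = (z.1 + 1, z.2) := by ext <;> simp
    rw [he, (hbp z.1 z.2).1]
  have hper2 : ∀ z : ℝ × ℝ, p (z + ((0:ℝ), (1:ℝ))) = p z := by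
    intro z
    have he : z + ((0:ℝ), (1:ℝ)) = (z.1, z.2 + 1) := by ext <;> simp
    rw [he, (hbp z.1 z.2).2]
  have hpxper : ∀ x y : ℝ, pdx p (x + 1, y) = pdx p (x, y) := by
    intro x y
    have he : ((x + 1 : ℝ), y) = ((x, y) + ((1:ℝ), (0:ℝ)) : ℝ × ℝ) := by ext <;> simp
    rw [pdx, pdx, he, fderiv_per hpdiff hper1]
  have hpyper : ∀ x y : ℝ, pdy p (x, y + 1) = pdy p (x, y) := by
    intro x y
    have he : ((x : ℝ), y + 1) = ((x, y) + ((0:ℝ), (1:ℝ)) : ℝ × ℝ) := by ext <;> simp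
    rw [pdy, pdy, he, fderiv_per hpdiff hper2]
  -- diagonal ellipticity
  have e11 : ∀ z : ℝ × ℝ,
      0 < a + pdx (pdx p) z - t * l11 * pdx p z - t * m11 * pdy p z := by
    intro z
    have := (posdef2_diag (hell z)).1
    simpa using this
  have e22 : ∀ z : ℝ × ℝ,
      0 < b + pdy (pdy p) z - t * l22 * pdx p z - t * m22 * pdy p z := by
    intro z
    have := (posdef2_diag (hell z)).2
    simpa using this
  -- generic x-direction estimate
  have claimX : ∀ (sc K : ℝ), 0 ≤ K →
      (∀ z : ℝ × ℝ, sc * pdx p z - K ≤ pdx (pdx p) z) →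
      ∀ z : ℝ × ℝ, |pdx p z| ≤ K * Real.exp (2 * |sc|) := by
    intro sc K hK hineq z
    obtain ⟨zx, zy⟩ := z
    have hψd : ∀ x : ℝ, HasDerivAt (fun x => pdx p (x, zy)) (pdx (pdx p) (x, zy)) x :=
      fun x => hasDerivAt_sliceX (hdx (x, zy))
    have hψdiff : Differentiable ℝ (fun x => pdx p (x, zy)) :=
      fun x => (hψd x).differentiableAt
    have hψper : Function.Periodic (fun x => pdx p (x, zy)) 1 := fun x => hpxper x zy
    -- a zero of pdx p on this line, by Rolle
    have hucont : ContinuousOn (fun x => p (x, zy)) (Set.Icc 0 1) :=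
      (hpdiff.continuous.comp (continuous_id.prodMk continuous_const)).continuousOn
    have h01 : p ((0:ℝ), zy) = p ((1:ℝ), zy) := by
      have := (hbp 0 zy).1; norm_num at this; exact this.symm
    obtain ⟨x₀, _, hx₀⟩ := exists_deriv_eq_zero (f := fun x => p (x, zy))
      (by norm_num : (0:ℝ) < 1) hucont h01
    have h0 : pdx p (x₀, zy) = 0 := by
      rw [← (hasDerivAt_sliceX (hpdiff (x₀, zy))).deriv]; exact hx₀
    have hineq' : ∀ x : ℝ, sc * pdx p (x, zy) - K ≤ deriv (fun x => pdx p (x, zy)) x := by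
      intro x; rw [(hψd x).deriv]; exact hineq (x, zy)
    exact keyODE hψdiff hψper h0 hK hineq' zx
  -- generic y-direction estimate
  have claimY : ∀ (sc K : ℝ), 0 ≤ K →
      (∀ z : ℝ × ℝ, sc * pdy p z - K ≤ pdy (pdy p) z) →
      ∀ z : ℝ × ℝ, |pdy p z| ≤ K * Real.exp (2 * |sc|) := by
    intro sc K hK hineq z
    obtain ⟨zx, zy⟩ := z
    have hψd : ∀ y : ℝ, HasDerivAt (fun y => pdy p (zx, y)) (pdy (pdy p) (zx, y)) y :=
      fun y => hasDerivAt_sliceY (hdy (zx, y))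
    have hψdiff : Differentiable ℝ (fun y => pdy p (zx, y)) :=
      fun y => (hψd y).differentiableAt
    have hψper : Function.Periodic (fun y => pdy p (zx, y)) 1 := fun y => hpyper zx y
    have hucont : ContinuousOn (fun y => p (zx, y)) (Set.Icc 0 1) :=
      (hpdiff.continuous.comp (continuous_const.prodMk continuous_id)).continuousOn
    have h01 : p (zx, (0:ℝ)) = p (zx, (1:ℝ)) := by
      have := (hbp zx 0).2; norm_num at this; exact this.symm
    obtain ⟨y₀, _, hy₀⟩ := exists_deriv_eq_zero (f := fun y => p (zx, y))
      (by norm_num : (0:ℝ) < 1) hucont h01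
    have h0 : pdy p (zx, y₀) = 0 := by
      rw [← (hasDerivAt_sliceY (hpdiff (zx, y₀))).deriv]; exact hy₀
    have hineq' : ∀ y : ℝ, sc * pdy p (zx, y) - K ≤ deriv (fun y => pdy p (zx, y)) y := by
      intro y; rw [(hψd y).deriv]; exact hineq (zx, y)
    exact keyODE hψdiff hψper h0 hK hineq' zy
  -- helpers for constant comparison
  have hup : ∀ (sc K : ℝ), 0 ≤ K → |sc| ≤ S → K * Real.exp (2 * |sc|) ≤ K * E := by
    intro sc K hK hsc
    exact mul_le_mul_of_nonneg_left (Real.exp_le_exp.mpr (by linarith)) hK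
  have hsl : ∀ u : ℝ, |t * u| ≤ |u| := by
    intro u
    rw [abs_mul]
    nlinarith [abs_nonneg u, abs_nonneg t]
  have habs_l11 : |l11| ≤ S := by
    rw [hSdef]; linarith [abs_nonneg l22, abs_nonneg m11, abs_nonneg m22]
  have habs_l22 : |l22| ≤ S := by
    rw [hSdef]; linarith [abs_nonneg l11, abs_nonneg m11, abs_nonneg m22]
  have habs_m11 : |m11| ≤ S := by
    rw [hSdef]; linarith [abs_nonneg l11, abs_nonneg l22, abs_nonneg m22]
  have habs_m22 : |m22| ≤ S := by
    rw [hSdef]; linarith [abs_nonneg l11, abs_nonneg l22, abs_nonneg m11]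
  -- the gradient bounds
  have hgrad : ∀ z : ℝ × ℝ, |pdx p z| ≤ B2 ∧ |pdy p z| ≤ B2 := by
    rcases mul_eq_zero.mp h1 with hm | hl
    · -- m11 = 0 : bound pdx first, then pdy
      have hKx : ∀ z : ℝ × ℝ, (t * l11) * pdx p z - a ≤ pdx (pdx p) z := by
        intro z
        have h := e11 z
        rw [hm] at h
        simp only [mul_zero, zero_mul] at h
        nlinarith
      have hx1 := claimX (t * l11) a ha.le hKx
      have hx : ∀ z : ℝ × ℝ, |pdx p z| ≤ B1 := by
        intro z
        refine le_trans (hx1 z) (le_trans (hup _ _ ha.le (le_trans (hsl l11) habs_l11)) ?_)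
        rw [hB1def]
        exact mul_le_mul_of_nonneg_right (by linarith) hEpos.le
      have hKy : ∀ z : ℝ × ℝ, (t * m22) * pdy p z - (b + |l22| * B1) ≤ pdy (pdy p) z := by
        intro z
        have h := e22 z
        have habs : |t * l22 * pdx p z| ≤ |l22| * B1 := by
          calc |t * l22 * pdx p z| = |t * l22| * |pdx p z| := abs_mul _ _
            _ ≤ |l22| * B1 := mul_le_mul (hsl l22) (hx z) (abs_nonneg _) (abs_nonneg _)
        linarith [neg_abs_le (t * l22 * pdx p z)]
      have hy1 := claimY (t * m22) (b + |l22| * B1)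
        (by positivity) hKy
      have hy : ∀ z : ℝ × ℝ, |pdy p z| ≤ B2 := by
        intro z
        refine le_trans (hy1 z) (le_trans (hup _ _ (by positivity)
          (le_trans (hsl m22) habs_m22)) ?_)
        rw [hB2def]
        apply mul_le_mul_of_nonneg_right _ hEpos.le
        linarith [mul_le_mul_of_nonneg_right habs_l22 hB1pos.le]
      exact fun z => ⟨le_trans (hx z) hB1le, hy z⟩
    · -- l22 = 0 : bound pdy first, then pdx
      have hKy : ∀ z : ℝ × ℝ, (t * m22) * pdy p z - b ≤ pdy (pdy p) z := by
        intro z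
        have h := e22 z
        rw [hl] at h
        simp only [mul_zero, zero_mul] at h
        nlinarith
      have hy1 := claimY (t * m22) b hb.le hKy
      have hy : ∀ z : ℝ × ℝ, |pdy p z| ≤ B1 := by
        intro z
        refine le_trans (hy1 z) (le_trans (hup _ _ hb.le (le_trans (hsl m22) habs_m22)) ?_)
        rw [hB1def]
        exact mul_le_mul_of_nonneg_right (by linarith) hEpos.le
      have hKx : ∀ z : ℝ × ℝ, (t * l11) * pdx p z - (a + |m11| * B1) ≤ pdx (pdx p) z := by
        intro z
        have h := e11 z
        have habs : |t * m11 * pdy p z| ≤ |m11| * B1 := by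
          calc |t * m11 * pdy p z| = |t * m11| * |pdy p z| := abs_mul _ _
            _ ≤ |m11| * B1 := mul_le_mul (hsl m11) (hy z) (abs_nonneg _) (abs_nonneg _)
        linarith [neg_abs_le (t * m11 * pdy p z)]
      have hx1 := claimX (t * l11) (a + |m11| * B1) (by positivity) hKx
      have hx : ∀ z : ℝ × ℝ, |pdx p z| ≤ B2 := by
        intro z
        refine le_trans (hx1 z) (le_trans (hup _ _ (by positivity)
          (le_trans (hsl l11) habs_l11)) ?_)
        rw [hB2def]
        apply mul_le_mul_of_nonneg_right _ hEpos.le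
        linarith [mul_le_mul_of_nonneg_right habs_m11 hB1pos.le]
      exact fun z => ⟨hx z, le_trans (hy z) hB1le⟩
  -- operator norm bound on the full derivative
  have hopnn : (0:ℝ) ≤ 2 * B2 := by linarith
  have hop : ∀ z : ℝ × ℝ, ‖fderiv ℝ p z‖ ≤ 2 * B2 := by
    intro z
    apply ContinuousLinearMap.opNorm_le_bound _ hopnn
    intro v
    have hv : v = v.1 • ((1:ℝ), (0:ℝ)) + v.2 • ((0:ℝ), (1:ℝ)) := by
      ext <;> simp
    have hval : fderiv ℝ p z v = v.1 * pdx p z + v.2 * pdy p z := by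
      conv_lhs => rw [hv]
      rw [map_add, _root_.map_smul, _root_.map_smul]
      simp [pdx, pdy, smul_eq_mul]
    rw [hval, Real.norm_eq_abs]
    have h1 : |v.1| ≤ ‖v‖ := by
      have := norm_fst_le v; rwa [Real.norm_eq_abs] at this
    have h2 : |v.2| ≤ ‖v‖ := by
      have := norm_snd_le v; rwa [Real.norm_eq_abs] at this
    calc |v.1 * pdx p z + v.2 * pdy p z|
        ≤ |v.1 * pdx p z| + |v.2 * pdy p z| := abs_add_le _ _
      _ = |v.1| * |pdx p z| + |v.2| * |pdy p z| := by rw [abs_mul, abs_mul]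
      _ ≤ ‖v‖ * B2 + ‖v‖ * B2 := by
          apply add_le_add
          · exact mul_le_mul h1 (hgrad z).1 (abs_nonneg _) (norm_nonneg _)
          · exact mul_le_mul h2 (hgrad z).2 (abs_nonneg _) (norm_nonneg _)
      _ = 2 * B2 * ‖v‖ := by ring
  -- Lipschitz estimate
  have hlip : ∀ z w : ℝ × ℝ, |p z - p w| ≤ 2 * B2 * ‖z - w‖ := by
    intro z w
    have := Convex.norm_image_sub_le_of_norm_fderiv_le
      (fun x _ => (hpdiff x)) (fun x _ => hop x) convex_univ
      (Set.mem_univ w) (Set.mem_univ z)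
    simpa [Real.norm_eq_abs] using this
  -- reduction to the unit square
  have hredx : ∀ (n : ℤ) (x y : ℝ), p (x + n, y) = p (x, y) := by
    intro n x y
    exact per_int (ψ := fun x => p (x, y)) (fun u => (hbp u y).1) n x
  have hredy : ∀ (n : ℤ) (x y : ℝ), p (x, y + n) = p (x, y) := by
    intro n x y
    exact per_int (ψ := fun y => p (x, y)) (fun u => (hbp x u).2) n y
  have hz' : ∀ z : ℝ × ℝ, p z = p (Int.fract z.1, Int.fract z.2) := by
    intro z
    have e1 : p (Int.fract z.1 + (⌊z.1⌋ : ℝ), z.2) = p (Int.fract z.1, z.2) :=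
      hredx ⌊z.1⌋ _ _
    rw [Int.fract_add_floor] at e1
    have e2 : p (Int.fract z.1, Int.fract z.2 + (⌊z.2⌋ : ℝ)) =
        p (Int.fract z.1, Int.fract z.2) := hredy ⌊z.2⌋ _ _
    rw [Int.fract_add_floor] at e2
    exact e1.trans e2
  -- oscillation estimate
  have hosc : ∀ z : ℝ × ℝ, |p z - torusInt p| ≤ 2 * B2 := by
    intro z
    rw [hz' z]
    set x' := Int.fract z.1 with hx'
    set y' := Int.fract z.2 with hy'
    have hx'mem : x' ∈ Set.Icc (0:ℝ) 1 := ⟨Int.fract_nonneg _, (Int.fract_lt_one _).le⟩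
    have hy'mem : y' ∈ Set.Icc (0:ℝ) 1 := ⟨Int.fract_nonneg _, (Int.fract_lt_one _).le⟩
    have hpt : ∀ u ∈ Set.Icc (0:ℝ) 1, ∀ v ∈ Set.Icc (0:ℝ) 1,
        |p (x', y') - p (u, v)| ≤ 2 * B2 := by
      intro u hu v hv
      have hd := hlip (x', y') (u, v)
      have hnorm : ‖((x', y') - (u, v) : ℝ × ℝ)‖ ≤ 1 := by
        have hfst : |x' - u| ≤ 1 :=
          abs_le.mpr ⟨by linarith [hx'mem.1, hu.2], by linarith [hx'mem.2, hu.1]⟩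
        have hsnd : |y' - v| ≤ 1 :=
          abs_le.mpr ⟨by linarith [hy'mem.1, hv.2], by linarith [hy'mem.2, hv.1]⟩
        rw [Prod.norm_def]
        apply max_le <;> rw [Real.norm_eq_abs]
        · exact hfst
        · exact hsnd
      linarith [hd, mul_le_mul_of_nonneg_left hnorm hopnn]
    have hinner : ∀ u ∈ Set.Icc (0:ℝ) 1,
        |p (x', y') - ∫ v in (0:ℝ)..1, p (u, v)| ≤ 2 * B2 := by
      intro u hu
      have hcont : Continuous fun v => p (u, v) :=
        hpdiff.continuous.comp (continuous_const.prodMk continuous_id)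
      have hInt : IntervalIntegrable (fun v => p (u, v)) volume 0 1 :=
        hcont.intervalIntegrable 0 1
      have heq : p (x', y') - ∫ v in (0:ℝ)..1, p (u, v)
          = ∫ v in (0:ℝ)..1, (p (x', y') - p (u, v)) := by
        rw [intervalIntegral.integral_sub (intervalIntegrable_const) hInt,
          intervalIntegral.integral_const]
        simp
      rw [heq]
      have hb' : ∀ v ∈ Set.uIoc (0:ℝ) 1, ‖p (x', y') - p (u, v)‖ ≤ 2 * B2 := by
        intro v hv
        rw [Set.uIoc_of_le (by norm_num : (0:ℝ) ≤ 1)] at hv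
        rw [Real.norm_eq_abs]
        exact hpt u hu v ⟨hv.1.le, hv.2⟩
      have := intervalIntegral.norm_integral_le_of_norm_le_const hb'
      rw [Real.norm_eq_abs] at this
      simpa using this
    have hgcont : Continuous fun u => ∫ v in (0:ℝ)..1, p (u, v) := by
      apply intervalIntegral.continuous_parametric_intervalIntegral_of_continuous'
        (f := fun u v => p (u, v))
      show Continuous fun z : ℝ × ℝ => p (z.1, z.2)
      exact hpdiff.continuous.comp (continuous_fst.prodMk continuous_snd)
    have hIntg : IntervalIntegrable (fun u => ∫ v in (0:ℝ)..1, p (u, v)) volume 0 1 :=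
      hgcont.intervalIntegrable 0 1
    have heq : p (x', y') - torusInt p
        = ∫ u in (0:ℝ)..1, (p (x', y') - ∫ v in (0:ℝ)..1, p (u, v)) := by
      rw [torusInt, intervalIntegral.integral_sub intervalIntegrable_const hIntg,
        intervalIntegral.integral_const]
      simp
    rw [heq]
    have hb2 : ∀ u ∈ Set.uIoc (0:ℝ) 1,
        ‖p (x', y') - ∫ v in (0:ℝ)..1, p (u, v)‖ ≤ 2 * B2 := by
      intro u hu
      rw [Set.uIoc_of_le (by norm_num : (0:ℝ) ≤ 1)] at hu
      rw [Real.norm_eq_abs]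
      exact hinner u ⟨hu.1.le, hu.2⟩
    have hfin := intervalIntegral.norm_integral_le_of_norm_le_const hb2
    rw [Real.norm_eq_abs] at hfin
    simpa using hfin
  intro z
  exact ⟨le_trans (hgrad z).1 (by linarith), le_trans (hgrad z).2 (by linarith),
    le_trans (hosc z) (by linarith)⟩
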